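/- For every two-dimensional lattice L of co-volume 1, there exists a point (x, y) in the half-fundamental domain D = {(x,y) ∈ ℝ² : y > 0, 0 ≤ x ≤ 1/2, x² + y² ≥ 1} and an orthogonal transformation O of ℝ² such that L = O·(ℤu ⊕ ℤv) where u = (1/√y, 0) and v = (x/√y, √y); moreover the associated quadratic form satisfies |m·u + n·v|² = (m + x n)²/y + y n² for all (m, n) ∈ ℤ². -/

import Mathlib

noncomputable section

/-- A point of the Euclidean plane with coordinates `a`, `b`. -/
def vec2 (a b : ℝ) : EuclideanSpace ℝ (Fin 2) := (WithLp.equiv 2 (Fin 2 → ℝ)).symm ![a, b]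

/-- The lattice (as a set of points) generated by `u` and `v`. -/
def latticeSet (u v : EuclideanSpace ℝ (Fin 2)) : Set (EuclideanSpace ℝ (Fin 2)) :=
  {p | ∃ m n : ℤ, p = (m : ℝ) • u + (n : ℝ) • v}

/-- The determinant of the pair of plane vectors `(u, v)`. -/
def det2 (u v : EuclideanSpace ℝ (Fin 2)) : ℝ := u 0 * v 1 - u 1 * v 0

/-- `L` is a two-dimensional lattice, i.e. `L = ℤu ⊕ ℤv` for a basis `(u,v)` of ℝ². -/
def IsLattice2 (L : Set (EuclideanSpace ℝ (Fin 2))) : Prop :=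
  ∃ u v : EuclideanSpace ℝ (Fin 2), det2 u v ≠ 0 ∧ L = latticeSet u v

/-- `L` is a two-dimensional lattice of co-volume `V = |det(u,v)|`. -/
def IsLattice2OfCovol (L : Set (EuclideanSpace ℝ (Fin 2))) (V : ℝ) : Prop :=
  ∃ u v : EuclideanSpace ℝ (Fin 2), det2 u v ≠ 0 ∧ |det2 u v| = V ∧ L = latticeSet u v

/-- The Epstein zeta function of a set of points: `ζ_L(s) = Σ'_{p ∈ L, p ≠ 0} |p|^{-s}`. -/
def epsteinZeta (L : Set (EuclideanSpace ℝ (Fin 2))) (s : ℝ) : ℝ :=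
  ∑' p : ↥(L \ {0}), ‖(p : EuclideanSpace ℝ (Fin 2))‖ ^ (-s)

/-- The Lennard-Jones type energy `E_f[L] = Σ'_{p ∈ L, p ≠ 0} (a|p|^{-α} - b|p|^{-β})`. -/
def LJenergy (a b α β : ℝ) (L : Set (EuclideanSpace ℝ (Fin 2))) : ℝ :=
  ∑' p : ↥(L \ {0}),
    (a * ‖(p : EuclideanSpace ℝ (Fin 2))‖ ^ (-α) - b * ‖(p : EuclideanSpace ℝ (Fin 2))‖ ^ (-β))

/-- The triangular lattice `A₂ = √(2/√3)·[ℤ(1,0) ⊕ ℤ(1/2,√3/2)]`, of co-volume 1. -/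
def triangularLattice : Set (EuclideanSpace ℝ (Fin 2)) :=
  latticeSet (Real.sqrt (2 / Real.sqrt 3) • vec2 1 0)
    (Real.sqrt (2 / Real.sqrt 3) • vec2 (1 / 2) (Real.sqrt 3 / 2))

/-- The square lattice `ℤ² = ℤ(1,0) ⊕ ℤ(0,1)`. -/
def squareLattice : Set (EuclideanSpace ℝ (Fin 2)) := latticeSet (vec2 1 0) (vec2 0 1)

/-- `L` is the image of `L'` under an orthogonal transformation of ℝ². -/
def IsRotationOf (L L' : Set (EuclideanSpace ℝ (Fin 2))) : Prop :=
  ∃ O : EuclideanSpace ℝ (Fin 2) ≃ₗᵢ[ℝ] EuclideanSpace ℝ (Fin 2), L = O '' L'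

/-- The unit co-volume lattice parametrized by `(x, y)` in the half-fundamental domain:
`ℤu ⊕ ℤv` with `u = (1/√y, 0)` and `v = (x/√y, √y)`. -/
def latticeXY (x y : ℝ) : Set (EuclideanSpace ℝ (Fin 2)) :=
  latticeSet (vec2 (1 / Real.sqrt y) 0) (vec2 (x / Real.sqrt y) (Real.sqrt y))

/-- The Riemann zeta function `ζ(s) = Σ_{m ≥ 1} m^{-s}` (real variable version). -/
def riemannZetaReal (s : ℝ) : ℝ := ∑' n : ℕ+, (n : ℝ) ^ (-s)

end

noncomputable section Aux

open Complex UpperHalfPlane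

/-- The identification of `ℂ` with the Euclidean plane. -/
abbrev eC : ℂ ≃ₗᵢ[ℝ] EuclideanSpace ℝ (Fin 2) := Complex.orthonormalBasisOneI.repr

lemma eC_symm_apply (p : EuclideanSpace ℝ (Fin 2)) :
    eC.symm p = (p 0 : ℂ) + (p 1 : ℂ) * Complex.I := by
  simpa using Complex.orthonormalBasisOneI_repr_symm_apply p

lemma eC_symm_vec2 (s t : ℝ) : eC.symm (vec2 s t) = (s : ℂ) + (t : ℂ) * Complex.I := by
  rw [eC_symm_apply]
  simp [vec2]

lemma latticeSet_swap (u v : EuclideanSpace ℝ (Fin 2)) : latticeSet u v = latticeSet v u := by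
  ext p; constructor <;> rintro ⟨m, n, rfl⟩ <;> exact ⟨n, m, add_comm _ _⟩

lemma latticeSet_neg_right (u v : EuclideanSpace ℝ (Fin 2)) :
    latticeSet u (-v) = latticeSet u v := by
  ext p; constructor <;> rintro ⟨m, n, rfl⟩ <;> refine ⟨m, -n, ?_⟩ <;> push_cast <;> module

lemma latticeSet_change (u v : EuclideanSpace ℝ (Fin 2)) (a b c d : ℤ) (h : a * d - b * c = 1) :
    latticeSet ((d:ℝ)•u + (c:ℝ)•v) ((b:ℝ)•u + (a:ℝ)•v) = latticeSet u v := by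
  have h' : (a:ℝ) * d - b * c = 1 := by exact_mod_cast h
  ext p; constructor
  · rintro ⟨m, n, rfl⟩
    exact ⟨m*d + n*b, m*c + n*a, by push_cast; module⟩
  · rintro ⟨m, n, rfl⟩
    refine ⟨a*m - b*n, d*n - c*m, ?_⟩
    push_cast
    match_scalars
    · linear_combination (-(m:ℝ)) * h'
    · linear_combination (-(n:ℝ)) * h'

lemma image_latticeSet (O : EuclideanSpace ℝ (Fin 2) ≃ₗᵢ[ℝ] EuclideanSpace ℝ (Fin 2))
    (u v : EuclideanSpace ℝ (Fin 2)) : O '' latticeSet u v = latticeSet (O u) (O v) := by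
  ext p; simp only [Set.mem_image]; constructor
  · rintro ⟨q, ⟨m, n, rfl⟩, rfl⟩; exact ⟨m, n, by simp⟩
  · rintro ⟨m, n, rfl⟩; exact ⟨(m:ℝ) • u + (n:ℝ) • v, ⟨m, n, rfl⟩, by simp⟩

lemma conj_mul_im (p q : EuclideanSpace ℝ (Fin 2)) :
    ((starRingEnd ℂ) (eC.symm p) * eC.symm q).im = det2 p q := by
  rw [Complex.mul_im]
  simp [eC_symm_apply, det2]
  ring

lemma div_im_det (p q : EuclideanSpace ℝ (Fin 2)) :
    ((eC.symm q) / (eC.symm p)).im = det2 p q / Complex.normSq (eC.symm p) := by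
  rw [Complex.div_im, div_sub_div_same]
  congr 1
  simp [eC_symm_apply, det2]
  ring

lemma norm_sq_formula (x y : ℝ) (hy : 0 < y) (m n : ℤ) :
    ‖(m : ℝ) • vec2 (1 / Real.sqrt y) 0 + (n : ℝ) • vec2 (x / Real.sqrt y) (Real.sqrt y)‖ ^ 2 =
      ((m : ℝ) + x * n) ^ 2 / y + y * (n : ℝ) ^ 2 := by
  have key : ∀ p : EuclideanSpace ℝ (Fin 2), ‖p‖^2 = p 0^2 + p 1^2 := fun p => by
    rw [EuclideanSpace.norm_eq, Real.sq_sqrt (by positivity)]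
    simp [Fin.sum_univ_two, sq_abs]
  rw [key]
  have hsp : 0 < Real.sqrt y := Real.sqrt_pos.mpr hy
  simp only [PiLp.add_apply, PiLp.smul_apply, smul_eq_mul,
    show vec2 (1/Real.sqrt y) 0 0 = 1/Real.sqrt y from rfl,
    show vec2 (1/Real.sqrt y) 0 1 = 0 from rfl,
    show vec2 (x/Real.sqrt y) (Real.sqrt y) 0 = x/Real.sqrt y from rfl,
    show vec2 (x/Real.sqrt y) (Real.sqrt y) 1 = Real.sqrt y from rfl]
  field_simp
  linear_combination (-2*(m:ℝ)*n*x - (m:ℝ)^2 - (n:ℝ)^2*x^2 - (n:ℝ)^2*y^2 + (n:ℝ)^2*y*(Real.sqrt y^2 + y)) * (Real.sq_sqrt hy.le)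

end Aux


open Complex UpperHalfPlane in
theorem fundamental_domain_parametrization
    (L : Set (EuclideanSpace ℝ (Fin 2))) (hL : IsLattice2OfCovol L 1) :
    ∃ x y : ℝ, 0 < y ∧ 0 ≤ x ∧ x ≤ 1 / 2 ∧ 1 ≤ x ^ 2 + y ^ 2 ∧
      (∃ O : EuclideanSpace ℝ (Fin 2) ≃ₗᵢ[ℝ] EuclideanSpace ℝ (Fin 2),
        L = O '' latticeSet (vec2 (1 / Real.sqrt y) 0) (vec2 (x / Real.sqrt y) (Real.sqrt y))) ∧
      (∀ m n : ℤ,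
        ‖(m : ℝ) • vec2 (1 / Real.sqrt y) 0 +
            (n : ℝ) • vec2 (x / Real.sqrt y) (Real.sqrt y)‖ ^ 2 =
          ((m : ℝ) + x * n) ^ 2 / y + y * (n : ℝ) ^ 2) := by
  obtain ⟨u₀, v₀, hne₀, hcov, hL₀⟩ := hL
  -- normalize to a positively oriented basis
  obtain ⟨u, v, hdet1, hLuv⟩ : ∃ u v : EuclideanSpace ℝ (Fin 2),
      det2 u v = 1 ∧ L = latticeSet u v := by
    rcases (abs_eq (by norm_num : (0:ℝ) ≤ 1)).mp hcov with h | h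
    · exact ⟨u₀, v₀, h, hL₀⟩
    · refine ⟨v₀, u₀, ?_, hL₀.trans (latticeSet_swap _ _)⟩
      simp only [det2] at h ⊢; linarith
  set U : ℂ := eC.symm u with hUdef
  set V : ℂ := eC.symm v with hVdef
  have hconjUV : ((starRingEnd ℂ) U * V).im = 1 := by rw [conj_mul_im, hdet1]
  have hUne : U ≠ 0 := by
    intro h; rw [h] at hconjUV; simp at hconjUV
  have hzim : 0 < (V / U).im := by
    rw [div_im_det, hdet1]
    have := Complex.normSq_pos.mpr hUne
    positivity
  set z : ℍ := ⟨V / U, hzim⟩ with hzdef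
  obtain ⟨g, hg⟩ := ModularGroup.exists_smul_mem_fd z
  have hg1 : 1 ≤ Complex.normSq ((g • z : ℍ) : ℂ) := hg.1
  have hg2 : |(g • z : ℍ).re| ≤ 1/2 := hg.2
  set a : ℤ := g 0 0 with hadef
  set b : ℤ := g 0 1 with hbdef
  set c : ℤ := g 1 0 with hcdef
  set d : ℤ := g 1 1 with hddef
  have had : a * d - b * c = 1 := by
    have := g.2; rwa [Matrix.det_fin_two] at this
  have had' : (a:ℝ) * d - b * c = 1 := by exact_mod_cast had
  set u' : EuclideanSpace ℝ (Fin 2) := (d:ℝ)•u + (c:ℝ)•v with hu'def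
  set v' : EuclideanSpace ℝ (Fin 2) := (b:ℝ)•u + (a:ℝ)•v with hv'def
  have hdet' : det2 u' v' = 1 := by
    have h2 : det2 u' v' = det2 u v := by
      simp only [hu'def, hv'def, det2, PiLp.add_apply, PiLp.smul_apply, smul_eq_mul]
      linear_combination (u 0 * v 1 - u 1 * v 0) * had'
    rw [h2, hdet1]
  set U' : ℂ := eC.symm u' with hU'def
  set V' : ℂ := eC.symm v' with hV'def
  have hU'eq : U' = (d:ℂ) * U + (c:ℂ) * V := by
    rw [hU'def, hu'def, map_add, map_smul, map_smul, ← hUdef, ← hVdef]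
    push_cast [Complex.real_smul]; ring
  have hV'eq : V' = (b:ℂ) * U + (a:ℂ) * V := by
    rw [hV'def, hv'def, map_add, map_smul, map_smul, ← hUdef, ← hVdef]
    push_cast [Complex.real_smul]; ring
  have hconjU'V' : ((starRingEnd ℂ) U' * V').im = 1 := by rw [conj_mul_im, hdet']
  have hU'ne : U' ≠ 0 := by
    intro h; rw [h] at hconjU'V'; simp at hconjU'V'
  -- the coordinates of the reduced point
  set y : ℝ := (g • z : ℍ).im with hydef
  have hy : 0 < y := (g • z : ℍ).2
  set x₀ : ℝ := (g • z : ℍ).re with hx₀def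
  have hwcoe : ((g • z : ℍ) : ℂ) = V' / U' := by
    have hden : ((c:ℝ):ℂ) * (V/U) + ((d:ℝ):ℂ) = U' / U := by
      rw [hU'eq]; field_simp; push_cast; ring
    have hnum : ((a:ℝ):ℂ) * (V/U) + ((b:ℝ):ℂ) = V' / U := by
      rw [hV'eq]; field_simp; push_cast; ring
    rw [UpperHalfPlane.specialLinearGroup_apply]
    simp only [algebraMap_int_eq, Int.coe_castRingHom, UpperHalfPlane.coe_mk]
    rw [show ((z:ℍ):ℂ) = V / U from rfl]
    rw [hnum, hden]
    field_simp
  have him : (V' / U').im = y := by rw [← hwcoe]; rfl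
  have hre : (V' / U').re = x₀ := by rw [← hwcoe]; rfl
  have hnsU' : Complex.normSq U' = 1 / y := by
    have h2 := div_im_det u' v'
    rw [← hU'def, ← hV'def, him, hdet'] at h2
    have hns : Complex.normSq U' ≠ 0 := by
      simpa [Complex.normSq_eq_zero] using hU'ne
    field_simp at h2 ⊢
    linarith
  have hsy : 0 < Real.sqrt y := Real.sqrt_pos.mpr hy
  have hnorm1 : ‖(Real.sqrt y : ℂ) * U'‖ = 1 := by
    rw [Complex.norm_def, Complex.normSq_mul, hnsU',
      Complex.normSq_ofReal, Real.mul_self_sqrt hy.le, mul_one_div,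
      div_self (ne_of_gt hy), Real.sqrt_one]
  set ζ : Circle := ⟨(Real.sqrt y : ℂ) * U',
    show _ ∈ Metric.sphere (0:ℂ) 1 from mem_sphere_zero_iff_norm.mpr hnorm1⟩ with hζdef
  have hζcoe : (ζ : ℂ) = (Real.sqrt y : ℂ) * U' := rfl
  -- preliminary mapping facts in ℂ
  have hrot_u : (ζ : ℂ) * (1 / (Real.sqrt y : ℂ)) = U' := by
    rw [hζcoe, mul_comm ((Real.sqrt y : ℂ)) U', mul_assoc]
    rw [mul_one_div, div_self (by exact_mod_cast ne_of_gt hsy), mul_one]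
  have hx0y : ((x₀ : ℂ) + (y : ℂ) * Complex.I) = V' / U' := by
    rw [← hre, ← him]; exact Complex.re_add_im _
  have hsysy : (Real.sqrt y : ℂ) * (Real.sqrt y : ℂ) = (y : ℂ) := by
    rw [← Complex.ofReal_mul, Real.mul_self_sqrt hy.le]
  -- the x coordinate and the two cases
  rcases le_or_gt 0 x₀ with hx₀pos | hx₀neg
  · -- x = x₀, pure rotation
    refine ⟨x₀, y, hy, hx₀pos, ?_, ?_, ?_, fun m n => norm_sq_formula x₀ y hy m n⟩
    · calc x₀ ≤ |x₀| := le_abs_self _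
        _ ≤ 1/2 := hg2
    · calc (1:ℝ) ≤ Complex.normSq ((g • z : ℍ) : ℂ) := hg1
        _ = x₀^2 + y^2 := by
          rw [Complex.normSq_apply]; rw [hwcoe, hre, him]; ring
    · refine ⟨(eC.symm.trans ((rotation ζ).trans eC)), ?_⟩
      rw [image_latticeSet]
      have h1 : (eC.symm.trans ((rotation ζ).trans eC)) (vec2 (1 / Real.sqrt y) 0) = u' := by
        simp only [LinearIsometryEquiv.trans_apply, eC_symm_vec2]
        push_cast
        rw [zero_mul, add_zero, rotation_apply, hrot_u, hU'def, eC.apply_symm_apply]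
      have h2 : (eC.symm.trans ((rotation ζ).trans eC))
          (vec2 (x₀ / Real.sqrt y) (Real.sqrt y)) = v' := by
        simp only [LinearIsometryEquiv.trans_apply, eC_symm_vec2, rotation_apply]
        have : (ζ : ℂ) * ((x₀ / Real.sqrt y : ℝ) + (Real.sqrt y : ℝ) * Complex.I) = V' := by
          rw [hζcoe]; push_cast
          have hne : (Real.sqrt y : ℂ) ≠ 0 := by exact_mod_cast ne_of_gt hsy
          have : (Real.sqrt y : ℂ) * U' * ((x₀:ℂ) / (Real.sqrt y:ℂ) + (Real.sqrt y:ℂ) * Complex.I)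
              = U' * ((x₀:ℂ) + (y:ℂ) * Complex.I) := by
            field_simp
            linear_combination Complex.I * hsysy
          rw [this, hx0y, mul_div_cancel₀ _ hU'ne]
        rw [this, hV'def, eC.apply_symm_apply]
      rw [h1, h2, hu'def, hv'def, latticeSet_change u v a b c d had, hLuv]
  · -- x = -x₀, rotation together with complex conjugation
    refine ⟨-x₀, y, hy, by linarith, ?_, ?_, ?_, fun m n => norm_sq_formula (-x₀) y hy m n⟩
    · calc -x₀ ≤ |x₀| := neg_le_abs _
        _ ≤ 1/2 := hg2
    · calc (1:ℝ) ≤ Complex.normSq ((g • z : ℍ) : ℂ) := hg1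
        _ = (-x₀)^2 + y^2 := by
          rw [Complex.normSq_apply]; rw [hwcoe, hre, him]; ring
    · refine ⟨(eC.symm.trans ((Complex.conjLIE.trans (rotation ζ)).trans eC)), ?_⟩
      rw [image_latticeSet]
      have h1 : (eC.symm.trans ((Complex.conjLIE.trans (rotation ζ)).trans eC))
          (vec2 (1 / Real.sqrt y) 0) = u' := by
        simp only [LinearIsometryEquiv.trans_apply, eC_symm_vec2]
        push_cast
        rw [zero_mul, add_zero, Complex.conjLIE_apply, map_div₀, map_one,
          Complex.conj_ofReal, rotation_apply, hrot_u, hU'def, eC.apply_symm_apply]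
      have h2 : (eC.symm.trans ((Complex.conjLIE.trans (rotation ζ)).trans eC))
          (vec2 (-x₀ / Real.sqrt y) (Real.sqrt y)) = -v' := by
        simp only [LinearIsometryEquiv.trans_apply, eC_symm_vec2, Complex.conjLIE_apply,
          rotation_apply]
        have hconj : (starRingEnd ℂ) (((-x₀ / Real.sqrt y : ℝ) : ℂ)
            + ((Real.sqrt y : ℝ) : ℂ) * Complex.I)
            = ((-x₀ / Real.sqrt y : ℝ) : ℂ) - ((Real.sqrt y : ℝ) : ℂ) * Complex.I := by
          simp [Complex.ext_iff]
        rw [hconj]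
        have : (ζ : ℂ) * (((-x₀ / Real.sqrt y : ℝ) : ℂ) - ((Real.sqrt y : ℝ):ℂ) * Complex.I)
            = -V' := by
          rw [hζcoe]; push_cast
          have hne : (Real.sqrt y : ℂ) ≠ 0 := by exact_mod_cast ne_of_gt hsy
          have hstep : (Real.sqrt y : ℂ) * U' *
              ((-x₀:ℂ) / (Real.sqrt y:ℂ) - (Real.sqrt y:ℂ) * Complex.I)
              = -(U' * ((x₀:ℂ) + (y:ℂ) * Complex.I)) := by
            field_simp
            linear_combination (-Complex.I) * hsysy
          rw [hstep, hx0y, mul_div_cancel₀ _ hU'ne]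
        rw [this, hV'def, ← map_neg, eC.apply_symm_apply]
      rw [h1, h2, hu'def, latticeSet_neg_right, hv'def,
        latticeSet_change u v a b c d had, hLuv]
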